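/- arXiv:2409.07206 — 9 statements merged into one kernel-verified Lean document; each statement's English description precedes it below -/
import Mathlib

section
/- The supremum over cuboids with fixed surface area k > 0 of the first Maxwell eigenvalue π²(1/ℓ₁² + 1/ℓ₂²) (where ℓ₁ ≥ ℓ₂ ≥ ℓ₃ > 0 and 2(ℓ₁ℓ₂ + ℓ₁ℓ₃ + ℓ₂ℓ₃) = k) equals +∞. -/
open Real Set

/-- the supremum over cuboids of fixed surface area k > 0 of the first
Maxwell eigenvalue is +∞, i.e. the set of eigenvalues is unbounded above. -/
theorem stmt6 (k : ℝ) (hk : 0 < k) :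
    ¬ BddAbove {x : ℝ | ∃ ℓ₁ ℓ₂ ℓ₃ : ℝ, 0 < ℓ₃ ∧ ℓ₃ ≤ ℓ₂ ∧ ℓ₂ ≤ ℓ₁ ∧
      2 * (ℓ₁ * ℓ₂ + ℓ₁ * ℓ₃ + ℓ₂ * ℓ₃) = k ∧
      x = Real.pi ^ 2 * (1 / ℓ₁ ^ 2 + 1 / ℓ₂ ^ 2)} := by
  rintro ⟨M, hM⟩
  set c : ℝ := max M 1 with hc
  have hc0 : (0:ℝ) < c := lt_of_lt_of_le one_pos (le_max_right _ _)
  have hcM : M ≤ c := le_max_left _ _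
  set t : ℝ := min (Real.sqrt (k / 6)) (Real.pi / Real.sqrt c) with htdef
  have ht0 : 0 < t := lt_min (Real.sqrt_pos.mpr (by linarith))
    (div_pos Real.pi_pos (Real.sqrt_pos.mpr hc0))
  have ht1 : t ^ 2 ≤ k / 6 := by
    have h1 : t ≤ Real.sqrt (k / 6) := min_le_left _ _
    have h2 : Real.sqrt (k / 6) ^ 2 = k / 6 := Real.sq_sqrt (by linarith)
    nlinarith [Real.sqrt_nonneg (k / 6)]
  have ht2 : c * t ^ 2 ≤ Real.pi ^ 2 := by
    have h1 : t ≤ Real.pi / Real.sqrt c := min_le_right _ _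
    have hsc : 0 < Real.sqrt c := Real.sqrt_pos.mpr hc0
    have h2 : t * Real.sqrt c ≤ Real.pi := by
      calc t * Real.sqrt c ≤ (Real.pi / Real.sqrt c) * Real.sqrt c := by
            exact mul_le_mul_of_nonneg_right h1 hsc.le
        _ = Real.pi := by field_simp
    have h3 : Real.sqrt c ^ 2 = c := Real.sq_sqrt hc0.le
    nlinarith [mul_le_mul h2 h2 (by positivity) Real.pi_pos.le, ht0.le, hsc.le]
  set l : ℝ := (k - 2 * t ^ 2) / (4 * t) with hldef
  have hl1 : t ≤ l := by
    rw [hldef, le_div_iff₀ (by linarith)]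
    nlinarith
  have hl0 : 0 < l := lt_of_lt_of_le ht0 hl1
  have hsurf : 2 * (l * t + l * t + t * t) = k := by
    rw [hldef]
    field_simp
    ring
  have hmem : Real.pi ^ 2 * (1 / l ^ 2 + 1 / t ^ 2) ∈
      {x : ℝ | ∃ ℓ₁ ℓ₂ ℓ₃ : ℝ, 0 < ℓ₃ ∧ ℓ₃ ≤ ℓ₂ ∧ ℓ₂ ≤ ℓ₁ ∧
        2 * (ℓ₁ * ℓ₂ + ℓ₁ * ℓ₃ + ℓ₂ * ℓ₃) = k ∧
        x = Real.pi ^ 2 * (1 / ℓ₁ ^ 2 + 1 / ℓ₂ ^ 2)} :=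
    ⟨l, t, t, ht0, le_refl t, hl1, hsurf, rfl⟩
  have hle := hM hmem
  have hinv1 : 0 < 1 / l ^ 2 := by positivity
  have hinv2 : c ≤ Real.pi ^ 2 * (1 / t ^ 2) := by
    rw [le_div_iff₀ (by positivity)] at *
    have ht2' : 0 < t ^ 2 := by positivity
    rw [mul_one_div, le_div_iff₀ ht2']
    linarith
  nlinarith [mul_pos (pow_pos Real.pi_pos 2) hinv1]
end

section
/- Let k > 0 and let ℓ₁ ≥ ℓ₂ ≥ ℓ₃ > 0 satisfy 2(ℓ₁ℓ₂ + ℓ₁ℓ₃ + ℓ₂ℓ₃) = k. Then π²(1/ℓ₁² + 1/ℓ₂²) > 4π²/k. -/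
open Real

/-- if ℓ₁ ≥ ℓ₂ ≥ ℓ₃ > 0 and 2(ℓ₁ℓ₂ + ℓ₁ℓ₃ + ℓ₂ℓ₃) = k then
π²(1/ℓ₁² + 1/ℓ₂²) > 4π²/k. -/
theorem stmt7 (k ℓ₁ ℓ₂ ℓ₃ : ℝ) (hk : 0 < k) (h₃ : 0 < ℓ₃) (h₃₂ : ℓ₃ ≤ ℓ₂)
    (h₂₁ : ℓ₂ ≤ ℓ₁) (hS : 2 * (ℓ₁ * ℓ₂ + ℓ₁ * ℓ₃ + ℓ₂ * ℓ₃) = k) :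
    4 * Real.pi ^ 2 / k < Real.pi ^ 2 * (1 / ℓ₁ ^ 2 + 1 / ℓ₂ ^ 2) := by
  have h1 : 0 < ℓ₂ := h₃.trans_le h₃₂
  have h0 : 0 < ℓ₁ := h1.trans_le h₂₁
  have hπ : (0:ℝ) < Real.pi ^ 2 := by positivity
  have key : 4 * (ℓ₁ ^ 2 * ℓ₂ ^ 2) < (ℓ₁ ^ 2 + ℓ₂ ^ 2) * k := by
    nlinarith [sq_nonneg (ℓ₁ - ℓ₂), mul_pos h0 h1, mul_pos (mul_pos h0 h1) h₃,
      mul_pos (mul_pos h0 h0) (mul_pos h1 h₃), mul_pos (mul_pos h1 h1) (mul_pos h0 h₃),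
      sq_nonneg (ℓ₁*ℓ₂ - ℓ₁*ℓ₃), sq_nonneg (ℓ₁*ℓ₂ - ℓ₂*ℓ₃)]
  rw [div_lt_iff₀ hk]
  have ha : ℓ₁ ^ 2 ≠ 0 := by positivity
  have hb : ℓ₂ ^ 2 ≠ 0 := by positivity
  rw [show (1 / ℓ₁ ^ 2 + 1 / ℓ₂ ^ 2) = (ℓ₁ ^ 2 + ℓ₂ ^ 2) / (ℓ₁ ^ 2 * ℓ₂ ^ 2) by
    field_simp; ring]
  rw [show Real.pi ^ 2 * ((ℓ₁ ^ 2 + ℓ₂ ^ 2) / (ℓ₁ ^ 2 * ℓ₂ ^ 2)) * k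
      = Real.pi ^ 2 * ((ℓ₁ ^ 2 + ℓ₂ ^ 2) * k) / (ℓ₁ ^ 2 * ℓ₂ ^ 2) from by ring,
    lt_div_iff₀ (by positivity : (0:ℝ) < ℓ₁ ^ 2 * ℓ₂ ^ 2)]
  nlinarith [mul_lt_mul_of_pos_left key hπ]
end

section
/- Let k > 0. Given ℓ₁, ℓ₃ > 0 with ℓ₃ℓ₁ < k/2, set ℓ₂ = (k/2 − ℓ₃ℓ₁)/(ℓ₃ + ℓ₁). Then 2(ℓ₁ℓ₂ + ℓ₁ℓ₃ + ℓ₂ℓ₃) = k, and the condition ℓ₃ ≤ ℓ₂ ≤ ℓ₁ holds if and only if √(ℓ₃² + k/2) − ℓ₃ ≤ ℓ₁ ≤ (k/2 − ℓ₃²)/(2ℓ₃) and 0 < ℓ₃ ≤ √(k/6). -/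
open Real

/-- with ℓ₂ = (k/2 − ℓ₃ℓ₁)/(ℓ₃ + ℓ₁), the surface area is k, and
ℓ₃ ≤ ℓ₂ ≤ ℓ₁ iff √(ℓ₃² + k/2) − ℓ₃ ≤ ℓ₁ ≤ (k/2 − ℓ₃²)/(2ℓ₃) and ℓ₃ ≤ √(k/6). -/
theorem stmt8 (k ℓ₁ ℓ₃ : ℝ) (hk : 0 < k) (h₁ : 0 < ℓ₁) (h₃ : 0 < ℓ₃)
    (hlt : ℓ₃ * ℓ₁ < k / 2) :
    2 * (ℓ₁ * ((k / 2 - ℓ₃ * ℓ₁) / (ℓ₃ + ℓ₁)) + ℓ₁ * ℓ₃ +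
        ((k / 2 - ℓ₃ * ℓ₁) / (ℓ₃ + ℓ₁)) * ℓ₃) = k ∧
    ((ℓ₃ ≤ (k / 2 - ℓ₃ * ℓ₁) / (ℓ₃ + ℓ₁) ∧ (k / 2 - ℓ₃ * ℓ₁) / (ℓ₃ + ℓ₁) ≤ ℓ₁) ↔
      (Real.sqrt (ℓ₃ ^ 2 + k / 2) - ℓ₃ ≤ ℓ₁ ∧ ℓ₁ ≤ (k / 2 - ℓ₃ ^ 2) / (2 * ℓ₃) ∧
        ℓ₃ ≤ Real.sqrt (k / 6))) := by
  have hs : 0 < ℓ₃ + ℓ₁ := by linarith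
  constructor
  · field_simp
    ring
  · constructor
    · rintro ⟨h32, h21⟩
      rw [le_div_iff₀ hs] at h32
      rw [div_le_iff₀ hs] at h21
      have h31 : ℓ₃ ≤ ℓ₁ := by nlinarith
      refine ⟨?_, ?_, ?_⟩
      · have hsq : ℓ₃ ^ 2 + k / 2 ≤ (ℓ₁ + ℓ₃) ^ 2 := by nlinarith
        have := Real.sqrt_le_sqrt hsq
        rw [Real.sqrt_sq (by linarith)] at this
        linarith
      · rw [le_div_iff₀ (by linarith : (0:ℝ) < 2 * ℓ₃)]
        nlinarith
      · rw [show ℓ₃ = Real.sqrt (ℓ₃ ^ 2) by rw [Real.sqrt_sq h₃.le]]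
        apply Real.sqrt_le_sqrt
        nlinarith
    · rintro ⟨hA, hB, _⟩
      rw [le_div_iff₀ (by linarith : (0:ℝ) < 2 * ℓ₃)] at hB
      have hA' : Real.sqrt (ℓ₃ ^ 2 + k / 2) ≤ ℓ₁ + ℓ₃ := by linarith
      have hsq : ℓ₃ ^ 2 + k / 2 ≤ (ℓ₁ + ℓ₃) ^ 2 := by
        nlinarith [Real.sq_sqrt (show (0:ℝ) ≤ ℓ₃ ^ 2 + k / 2 by positivity),
          Real.sqrt_nonneg (ℓ₃ ^ 2 + k / 2)]
      constructor
      · rw [le_div_iff₀ hs]; nlinarith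
      · rw [div_le_iff₀ hs]; nlinarith
end

section
/- The infimum of π²(1/ℓ₁² + 1/ℓ₂²) over all triples ℓ₁ ≥ ℓ₂ ≥ ℓ₃ > 0 with 2(ℓ₁ℓ₂ + ℓ₁ℓ₃ + ℓ₂ℓ₃) = k equals 4π²/k, and it is not attained. -/
open Real Set

lemma stmt10_strict (k : ℝ) (hk : 0 < k) {a b c : ℝ} (hc : 0 < c) (hcb : c ≤ b)
    (hba : b ≤ a) (hsum : 2 * (a * b + a * c + b * c) = k) :
    4 * Real.pi ^ 2 / k < Real.pi ^ 2 * (1 / a ^ 2 + 1 / b ^ 2) := by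
  have hπ := Real.pi_pos
  have hb : 0 < b := lt_of_lt_of_le hc hcb
  have ha : 0 < a := lt_of_lt_of_le hb hba
  have ha2 : (0:ℝ) < a ^ 2 := by positivity
  have hb2 : (0:ℝ) < b ^ 2 := by positivity
  have h : 4 * (a ^ 2 * b ^ 2) < k * (a ^ 2 + b ^ 2) := by
    nlinarith [sq_nonneg (a - b), mul_pos ha hb, mul_pos hc (add_pos ha hb),
      mul_pos (mul_pos ha hb) (mul_pos hc (add_pos ha hb))]
  have hrw : Real.pi ^ 2 * (1 / a ^ 2 + 1 / b ^ 2)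
      = Real.pi ^ 2 * (a ^ 2 + b ^ 2) / (a ^ 2 * b ^ 2) := by
    field_simp; ring
  rw [hrw, div_lt_div_iff₀ hk (by positivity)]
  nlinarith [mul_lt_mul_of_pos_left h (pow_pos hπ 2)]

/-- the infimum of π²(1/ℓ₁² + 1/ℓ₂²) over triples ℓ₁ ≥ ℓ₂ ≥ ℓ₃ > 0
with surface area k equals 4π²/k, and it is not attained. -/
theorem stmt10 (k : ℝ) (hk : 0 < k) :
    IsGLB {x : ℝ | ∃ ℓ₁ ℓ₂ ℓ₃ : ℝ, 0 < ℓ₃ ∧ ℓ₃ ≤ ℓ₂ ∧ ℓ₂ ≤ ℓ₁ ∧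
        2 * (ℓ₁ * ℓ₂ + ℓ₁ * ℓ₃ + ℓ₂ * ℓ₃) = k ∧
        x = Real.pi ^ 2 * (1 / ℓ₁ ^ 2 + 1 / ℓ₂ ^ 2)} (4 * Real.pi ^ 2 / k) ∧
    4 * Real.pi ^ 2 / k ∉ {x : ℝ | ∃ ℓ₁ ℓ₂ ℓ₃ : ℝ, 0 < ℓ₃ ∧ ℓ₃ ≤ ℓ₂ ∧ ℓ₂ ≤ ℓ₁ ∧
        2 * (ℓ₁ * ℓ₂ + ℓ₁ * ℓ₃ + ℓ₂ * ℓ₃) = k ∧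
        x = Real.pi ^ 2 * (1 / ℓ₁ ^ 2 + 1 / ℓ₂ ^ 2)} := by
  have hπ := Real.pi_pos
  constructor
  · constructor
    · rintro x ⟨a, b, c, hc, hcb, hba, hsum, rfl⟩
      exact le_of_lt (stmt10_strict k hk hc hcb hba hsum)
    · intro m hm
      by_contra hlt
      push_neg at hlt
      -- hlt : 4π²/k < m
      have hm0 : 0 < m := lt_trans (by positivity) hlt
      have hmax_lt : max (2 * Real.pi ^ 2 / m) (k / 6) < k / 2 := by
        apply max_lt
        · rw [div_lt_div_iff₀ hm0 (by norm_num : (0:ℝ) < 2)]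
          rw [div_lt_iff₀ hk] at hlt
          nlinarith
        · linarith
      set s : ℝ := (max (2 * Real.pi ^ 2 / m) (k / 6) + k / 2) / 2 with hs
      have hs_lt : s < k / 2 := by
        rw [hs]; linarith
      have hs_gt : max (2 * Real.pi ^ 2 / m) (k / 6) < s := by
        rw [hs]; linarith
      have hs_pi : 2 * Real.pi ^ 2 / m < s :=
        lt_of_le_of_lt (le_max_left _ _) hs_gt
      have hs_k6 : k / 6 < s := lt_of_le_of_lt (le_max_right _ _) hs_gt
      have hs0 : 0 < s := lt_trans (by linarith) hs_k6
      set a := Real.sqrt s with hadef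
      have ha0 : 0 < a := Real.sqrt_pos.mpr hs0
      have ha2 : a ^ 2 = s := Real.sq_sqrt hs0.le
      set t := (k / 2 - s) / (2 * a) with htdef
      have ht0 : 0 < t := div_pos (by linarith) (by linarith)
      have hta : t ≤ a := by
        rw [htdef, div_le_iff₀ (by linarith : (0:ℝ) < 2 * a)]
        nlinarith
      have hsum : 2 * (a * a + a * t + a * t) = k := by
        have h2at : 2 * (a * t) = k / 2 - s := by
          rw [htdef]; field_simp
        have haa : a * a = s := by nlinarith
        nlinarith
      have hmem : Real.pi ^ 2 * (1 / a ^ 2 + 1 / a ^ 2) ∈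
          {x : ℝ | ∃ ℓ₁ ℓ₂ ℓ₃ : ℝ, 0 < ℓ₃ ∧ ℓ₃ ≤ ℓ₂ ∧ ℓ₂ ≤ ℓ₁ ∧
            2 * (ℓ₁ * ℓ₂ + ℓ₁ * ℓ₃ + ℓ₂ * ℓ₃) = k ∧
            x = Real.pi ^ 2 * (1 / ℓ₁ ^ 2 + 1 / ℓ₂ ^ 2)} :=
        ⟨a, a, t, ht0, hta, le_refl a, hsum, rfl⟩
      have hle := hm hmem
      have hval : Real.pi ^ 2 * (1 / a ^ 2 + 1 / a ^ 2) = 2 * Real.pi ^ 2 / s := by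
        rw [ha2]; field_simp; ring
      rw [hval] at hle
      -- hle : m ≤ 2π²/s, but s > 2π²/m ⟹ 2π²/s < m
      have : 2 * Real.pi ^ 2 / s < m := by
        rw [div_lt_iff₀ hs0]
        rw [div_lt_iff₀ hm0] at hs_pi
        nlinarith
      linarith
  · rintro ⟨a, b, c, hc, hcb, hba, hsum, heq⟩
    exact absurd heq (ne_of_lt (stmt10_strict k hk hc hcb hba hsum))
end

section
/- For ℓ₁ ≥ ℓ₂ ≥ ℓ₃ > 0 with ℓ₂ = (k/2 − ℓ₃ℓ₁)/(ℓ₃ + ℓ₁), one has π²(1/ℓ₁² + (ℓ₃ + ℓ₁)²/(k/2 − ℓ₃ℓ₁)²) ≥ 2π²(ℓ₃ + ℓ₁)/(ℓ₁(k/2 − ℓ₃ℓ₁)) > 4π²/k. -/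
open Real

lemma young_aux (a b s : ℝ) (ha : 0 < a) (hb : 0 < b) :
    2 * s / (a * b) ≤ 1 / a ^ 2 + s ^ 2 / b ^ 2 := by
  have e : 1 / a ^ 2 + s ^ 2 / b ^ 2 - 2 * s / (a * b) = (1 / a - s / b) ^ 2 := by
    field_simp [ha.ne', hb.ne']
    ring
  nlinarith [sq_nonneg (1 / a - s / b)]

/-- the Young-inequality step:
π²(1/ℓ₁² + (ℓ₃+ℓ₁)²/(k/2 − ℓ₃ℓ₁)²) ≥ 2π²(ℓ₃+ℓ₁)/(ℓ₁(k/2 − ℓ₃ℓ₁)) > 4π²/k. -/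
theorem stmt11 (k ℓ₁ ℓ₂ ℓ₃ : ℝ) (hk : 0 < k) (h₃ : 0 < ℓ₃) (h₃₂ : ℓ₃ ≤ ℓ₂)
    (h₂₁ : ℓ₂ ≤ ℓ₁) (hlt : ℓ₃ * ℓ₁ < k / 2)
    (h₂ : ℓ₂ = (k / 2 - ℓ₃ * ℓ₁) / (ℓ₃ + ℓ₁)) :
    2 * Real.pi ^ 2 * (ℓ₃ + ℓ₁) / (ℓ₁ * (k / 2 - ℓ₃ * ℓ₁)) ≤
      Real.pi ^ 2 * (1 / ℓ₁ ^ 2 + (ℓ₃ + ℓ₁) ^ 2 / (k / 2 - ℓ₃ * ℓ₁) ^ 2) ∧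
    4 * Real.pi ^ 2 / k < 2 * Real.pi ^ 2 * (ℓ₃ + ℓ₁) / (ℓ₁ * (k / 2 - ℓ₃ * ℓ₁)) := by
  have h₁ : 0 < ℓ₁ := lt_of_lt_of_le h₃ (h₃₂.trans h₂₁)
  have hd : 0 < k / 2 - ℓ₃ * ℓ₁ := by linarith
  have hpi : 0 < Real.pi ^ 2 := by positivity
  constructor
  · have key := young_aux ℓ₁ (k / 2 - ℓ₃ * ℓ₁) (ℓ₃ + ℓ₁) h₁ hd
    have e2 : 2 * Real.pi ^ 2 * (ℓ₃ + ℓ₁) / (ℓ₁ * (k / 2 - ℓ₃ * ℓ₁))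
        = Real.pi ^ 2 * (2 * (ℓ₃ + ℓ₁) / (ℓ₁ * (k / 2 - ℓ₃ * ℓ₁))) := by ring
    rw [e2]
    exact mul_le_mul_of_nonneg_left key hpi.le
  · rw [div_lt_div_iff₀ hk (by positivity)]
    nlinarith [mul_pos hpi (mul_pos hk h₃), mul_pos hpi (mul_pos h₃ (mul_pos h₁ h₁))]
end

section
/- Let a₁ be as above with 2.7436 < a₁ < 2.7438, and let k > 0. The ball of volume k has radius R = (3k/(4π))^(1/3) and first Maxwell eigenvalue a₁² (16π²/(9k²))^(1/3), which is strictly less than 2π²/k^(2/3), the first Maxwell eigenvalue of the cube of volume k. -/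
open Real

/-- with 2.7436 < a₁ < 2.7438 and k > 0, the ball of volume k has radius
R = (3k/(4π))^(1/3), first Maxwell eigenvalue (a₁/R)² = a₁²(16π²/(9k²))^(1/3), and this
is strictly smaller than 2π²/k^(2/3), the eigenvalue of the cube of volume k. -/
theorem stmt13 (a₁ k : ℝ) (ha : 2.7436 < a₁) (ha' : a₁ < 2.7438) (hk : 0 < k) :
    (a₁ / (3 * k / (4 * Real.pi)) ^ ((1:ℝ)/3)) ^ 2
      = a₁ ^ 2 * (16 * Real.pi ^ 2 / (9 * k ^ 2)) ^ ((1:ℝ)/3) ∧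
    a₁ ^ 2 * (16 * Real.pi ^ 2 / (9 * k ^ 2)) ^ ((1:ℝ)/3)
      < 2 * Real.pi ^ 2 / k ^ ((2:ℝ)/3) := by
  have hπ := Real.pi_pos
  have hx : (0:ℝ) < 3 * k / (4 * Real.pi) := by positivity
  set x := 3 * k / (4 * Real.pi) with hxdef
  have hy : (0:ℝ) < 16 * Real.pi ^ 2 / (9 * k ^ 2) := by positivity
  have hkey : 16 * Real.pi ^ 2 / (9 * k ^ 2) = x ^ (-2 : ℝ) := by
    rw [Real.rpow_neg hx.le, show ((2:ℝ)) = ((2:ℕ):ℝ) by norm_num,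
      Real.rpow_natCast]
    rw [hxdef]
    field_simp
    ring
  constructor
  · rw [div_pow, hkey, ← Real.rpow_natCast (x ^ ((1:ℝ)/3)) 2,
      ← Real.rpow_mul hx.le, ← Real.rpow_mul hx.le, div_eq_mul_inv,
      show (-2:ℝ)*((1:ℝ)/3) = -((1:ℝ)/3*((2:ℕ):ℝ)) by push_cast; ring,
      Real.rpow_neg hx.le]
  · have hL : (0:ℝ) ≤ a₁ ^ 2 * (16 * Real.pi ^ 2 / (9 * k ^ 2)) ^ ((1:ℝ)/3) := by
      positivity
    have hR : (0:ℝ) ≤ 2 * Real.pi ^ 2 / k ^ ((2:ℝ)/3) := by positivity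
    refine lt_of_pow_lt_pow_left₀ 3 hR ?_
    have hcube : ((16 * Real.pi ^ 2 / (9 * k ^ 2)) ^ ((1:ℝ)/3)) ^ 3
        = 16 * Real.pi ^ 2 / (9 * k ^ 2) := by
      rw [← Real.rpow_natCast ((16 * Real.pi ^ 2 / (9 * k ^ 2)) ^ ((1:ℝ)/3)) 3,
        ← Real.rpow_mul hy.le]
      norm_num
    have hcube2 : (k ^ ((2:ℝ)/3)) ^ 3 = k ^ 2 := by
      rw [← Real.rpow_natCast (k ^ ((2:ℝ)/3)) 3, ← Real.rpow_mul hk.le]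
      norm_num
    have h6 : a₁ ^ 6 < 2.7438 ^ 6 := by
      have h0 : (0:ℝ) ≤ a₁ := by linarith
      exact pow_lt_pow_left₀ ha' h0 (by norm_num)
    have hpi4 : (3.141592:ℝ) ^ 4 < Real.pi ^ 4 :=
      pow_lt_pow_left₀ Real.pi_gt_d6 (by norm_num) (by norm_num)
    have hmain : 2 * a₁ ^ 6 < 9 * Real.pi ^ 4 := by nlinarith
    have hk2 : (0:ℝ) < k ^ 2 := by positivity
    rw [mul_pow, hcube, div_pow, hcube2]
    rw [show (a₁^2)^3 * (16 * Real.pi ^ 2 / (9 * k ^ 2))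
        = (a₁^6 * 16 * Real.pi ^ 2) / (9 * k ^ 2) by ring,
      div_lt_div_iff₀ (by positivity) hk2]
    nlinarith [mul_pos (mul_pos (pow_pos hπ 2) hk2) (sub_pos.2 hmain)]
end

section
/- With c = (η + 2δ)/(ηδ + 2) and 0 < η < δ < 1, the Dirichlet energy of the test function u on ω_{δ,η} equals (η/δ)(1/δ + c)² and satisfies (η/δ)(1/δ + c)² = O(η/δ³) as δ → 0 (e.g., it is at most 4η/δ³ for δ small). -/
open Real Filter Set

/-- with c = (η + 2δ)/(ηδ + 2), the Dirichlet energy of the test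
function equals the channel area η·δ times the slope squared, i.e. (η/δ)(1/δ + c)²,
and it is O(η/δ³) as δ → 0: e.g. it is at most 4η/δ³ for δ small. -/
theorem stmt15 :
    (∀ δ η : ℝ, 0 < η → η < δ → δ < 1 →
      η * δ * ((1 / δ) * (1 / δ + (η + 2 * δ) / (η * δ + 2))) ^ 2
        = (η / δ) * (1 / δ + (η + 2 * δ) / (η * δ + 2)) ^ 2) ∧
    (∃ δ₀ : ℝ, 0 < δ₀ ∧ ∀ δ η : ℝ, 0 < η → η < δ → δ < δ₀ →
      (η / δ) * (1 / δ + (η + 2 * δ) / (η * δ + 2)) ^ 2 ≤ 4 * η / δ ^ 3) := by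
  constructor
  · intro δ η hη hηδ hδ
    have hδ0 : δ ≠ 0 := ne_of_gt (hη.trans hηδ)
    field_simp
  · refine ⟨1/2, by norm_num, ?_⟩
    intro δ η hη hηδ hδ
    have hδ0 : 0 < δ := hη.trans hηδ
    have hden : (0:ℝ) < η * δ + 2 := by positivity
    have hc : (η + 2 * δ) / (η * δ + 2) ≤ 1 / δ := by
      rw [div_le_div_iff₀ hden hδ0]
      nlinarith
    have h1 : 1 / δ + (η + 2 * δ) / (η * δ + 2) ≤ 2 / δ := by
      have : 1 / δ + 1 / δ = 2 / δ := by ring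
      linarith
    have h0 : (0:ℝ) ≤ 1 / δ + (η + 2 * δ) / (η * δ + 2) := by positivity
    have hsq : (1 / δ + (η + 2 * δ) / (η * δ + 2)) ^ 2 ≤ (2 / δ) ^ 2 :=
      pow_le_pow_left₀ h0 h1 2
    calc (η / δ) * (1 / δ + (η + 2 * δ) / (η * δ + 2)) ^ 2
        ≤ (η / δ) * (2 / δ) ^ 2 := by
          apply mul_le_mul_of_nonneg_left hsq (by positivity)
      _ = 4 * η / δ ^ 3 := by field_simp; ring
end

section
/- With c = (η + 2δ)/(ηδ + 2) and 0 < η < δ < 1, the L² norm squared of the test function u on ω_{δ,η} equals c² + 1 + (η/(3δ))(1 − cδ + c²δ²), and if η/δ → 0 as δ → 0 then this tends to 1. -/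
open Real Filter Set intervalIntegral

lemma key_integral (c a δ : ℝ) :
    ∫ x in (0:ℝ)..δ, (c - a * x) ^ 2 = c ^ 2 * δ - a * c * δ ^ 2 + a ^ 2 * δ ^ 3 / 3 := by
  have h : ∀ x ∈ Set.uIcc (0:ℝ) δ,
      HasDerivAt (fun x => c ^ 2 * x - a * c * x ^ 2 + a ^ 2 * x ^ 3 / 3) ((c - a * x) ^ 2) x := by
    intro x _
    have := (((hasDerivAt_id x).const_mul (c ^ 2)).sub
        ((hasDerivAt_pow 2 x).const_mul (a * c))).add
      (((hasDerivAt_pow 3 x).const_mul (a ^ 2)).div_const 3)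
    exact this.congr_deriv (by push_cast; ring)
  rw [intervalIntegral.integral_eq_sub_of_hasDerivAt h (((continuous_const.sub (continuous_const.mul continuous_id)).pow 2).intervalIntegrable 0 δ)]
  ring

/-- with c = (η + 2δ)/(ηδ + 2), the squared L² norm of the test function
equals c² + 1 + (η/(3δ))(1 − cδ + c²δ²); if η/δ → 0 as δ → 0⁺ then it tends to 1. -/
theorem stmt16 :
    (∀ δ η : ℝ, 0 < η → η < δ → δ < 1 →
      ((η + 2 * δ) / (η * δ + 2)) ^ 2 * 1 + (1 / δ) ^ 2 * δ ^ 2 +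
        η * ∫ x in (0:ℝ)..δ,
          ((η + 2 * δ) / (η * δ + 2) -
            (1 / δ) * (1 / δ + (η + 2 * δ) / (η * δ + 2)) * x) ^ 2
      = ((η + 2 * δ) / (η * δ + 2)) ^ 2 + 1 +
        (η / (3 * δ)) * (1 - ((η + 2 * δ) / (η * δ + 2)) * δ +
          ((η + 2 * δ) / (η * δ + 2)) ^ 2 * δ ^ 2)) ∧
    (∀ η : ℝ → ℝ, (∀ δ ∈ Set.Ioo (0:ℝ) 1, 0 < η δ ∧ η δ < δ) →
      Tendsto (fun δ => η δ / δ) (nhdsWithin 0 (Set.Ioi 0)) (nhds 0) →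
      Tendsto (fun δ =>
          ((η δ + 2 * δ) / (η δ * δ + 2)) ^ 2 + 1 +
            (η δ / (3 * δ)) * (1 - ((η δ + 2 * δ) / (η δ * δ + 2)) * δ +
              ((η δ + 2 * δ) / (η δ * δ + 2)) ^ 2 * δ ^ 2))
        (nhdsWithin 0 (Set.Ioi 0)) (nhds 1)) := by
  constructor
  · intro δ η hη hηδ hδ1
    have hδ : (0:ℝ) < δ := hη.trans hηδ
    set c := (η + 2 * δ) / (η * δ + 2) with hc
    rw [key_integral c ((1 / δ) * (1 / δ + c)) δ]
    have hδ0 : δ ≠ 0 := ne_of_gt hδ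
    field_simp
    ring
  · intro η hbd hratio
    set l := nhdsWithin (0:ℝ) (Set.Ioi 0)
    have hmem : ∀ᶠ δ in l, δ ∈ Set.Ioo (0:ℝ) 1 := by
      have h1 : ∀ᶠ δ in nhds (0:ℝ), δ < 1 := Filter.Tendsto.eventually_lt_const one_pos tendsto_id
      filter_upwards [self_mem_nhdsWithin, nhdsWithin_le_nhds h1] with δ h h1
      exact ⟨h, h1⟩
    have hδ : Tendsto (fun δ : ℝ => δ) l (nhds 0) :=
      tendsto_id.mono_left nhdsWithin_le_nhds
    have hη : Tendsto (fun δ => η δ) l (nhds 0) := by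
      have := hratio.mul hδ
      rw [zero_mul] at this
      refine this.congr' ?_
      filter_upwards [self_mem_nhdsWithin] with δ (h : δ ∈ Set.Ioi 0)
      exact div_mul_cancel₀ _ (ne_of_gt h)
    have hcden : Tendsto (fun δ => η δ * δ + 2) l (nhds 2) := by
      have := (hη.mul hδ).add (tendsto_const_nhds (x := (2:ℝ)))
      simpa using this
    have hcnum : Tendsto (fun δ => η δ + 2 * δ) l (nhds 0) := by
      have := hη.add (hδ.const_mul 2)
      simpa using this
    have hc : Tendsto (fun δ => (η δ + 2 * δ) / (η δ * δ + 2)) l (nhds 0) := by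
      have := hcnum.div hcden (by norm_num)
      simpa [Pi.div_def] using this
    have hrat3 : Tendsto (fun δ => η δ / (3 * δ)) l (nhds 0) := by
      have := hratio.div_const 3
      rw [zero_div] at this
      refine this.congr' ?_
      filter_upwards [self_mem_nhdsWithin] with δ (h : δ ∈ Set.Ioi 0)
      rw [div_div, mul_comm]
    have hbracket : Tendsto (fun δ =>
        1 - ((η δ + 2 * δ) / (η δ * δ + 2)) * δ +
          ((η δ + 2 * δ) / (η δ * δ + 2)) ^ 2 * δ ^ 2) l (nhds 1) := by
      have := ((tendsto_const_nhds (x := (1:ℝ))).sub (hc.mul hδ)).add ((hc.pow 2).mul (hδ.pow 2))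
      simpa using this
    have := ((hc.pow 2).add (tendsto_const_nhds (x := (1:ℝ)))).add (hrat3.mul hbracket)
    norm_num at this
    convert this using 2
end

section
/- Let 0 < η < δ < 1 with η = O(δ^{3+β}) for some β > 0 as δ → 0. Then the Rayleigh quotient R(δ,η) = [(η/δ)(1/δ + c)²] / [c² + 1 + (η/(3δ))(1 − cδ + c²δ²)], with c = (η + 2δ)/(ηδ + 2), satisfies R(δ,η) = O(δ^β) as δ → 0⁺; in particular R(δ,η) → 0. -/
open Real Filter Set

lemma stmt17_aux (δ e : ℝ) (hδ0 : 0 < δ) (hδ1 : δ < 1) (he : 0 < e) (hed : e < δ) :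
    0 ≤ ((e / δ) * (1 / δ + (e + 2 * δ) / (e * δ + 2)) ^ 2) /
        (((e + 2 * δ) / (e * δ + 2)) ^ 2 + 1 +
          (e / (3 * δ)) * (1 - ((e + 2 * δ) / (e * δ + 2)) * δ +
            ((e + 2 * δ) / (e * δ + 2)) ^ 2 * δ ^ 2)) ∧
    ((e / δ) * (1 / δ + (e + 2 * δ) / (e * δ + 2)) ^ 2) /
        (((e + 2 * δ) / (e * δ + 2)) ^ 2 + 1 +
          (e / (3 * δ)) * (1 - ((e + 2 * δ) / (e * δ + 2)) * δ +
            ((e + 2 * δ) / (e * δ + 2)) ^ 2 * δ ^ 2))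
      ≤ 9 * e / δ ^ 3 := by
  set c : ℝ := (e + 2 * δ) / (e * δ + 2) with hc
  have hd2 : (0:ℝ) < e * δ + 2 := by nlinarith
  have hcpos : 0 < c := div_pos (by linarith) hd2
  have hcle : c ≤ 3 / 2 := by
    rw [hc, div_le_iff₀ hd2]; nlinarith
  have hq : (3:ℝ)/4 ≤ 1 - c * δ + c ^ 2 * δ ^ 2 := by
    nlinarith [sq_nonneg (c * δ - 1/2)]
  have hden : (1:ℝ) ≤ c ^ 2 + 1 + (e / (3 * δ)) * (1 - c * δ + c ^ 2 * δ ^ 2) := by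
    have h1 : 0 ≤ e / (3 * δ) := by positivity
    have h2 : 0 ≤ (e / (3 * δ)) * (1 - c * δ + c ^ 2 * δ ^ 2) :=
      mul_nonneg h1 (by linarith)
    nlinarith [sq_nonneg c]
  have hnum0 : 0 ≤ (e / δ) * (1 / δ + c) ^ 2 := by positivity
  have hR : ((e / δ) * (1 / δ + c) ^ 2) /
      (c ^ 2 + 1 + (e / (3 * δ)) * (1 - c * δ + c ^ 2 * δ ^ 2))
      ≤ (e / δ) * (1 / δ + c) ^ 2 := div_le_self hnum0 hden
  constructor
  · exact div_nonneg hnum0 (by linarith)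
  · refine hR.trans ?_
    have h3 : (1 / δ + c) ≤ 3 / δ := by
      have : (3:ℝ)/2 ≤ 2 / δ := by
        rw [div_le_div_iff₀ (by norm_num) hδ0]; linarith
      have : c ≤ 2 / δ := hcle.trans this
      have h4 : 1 / δ + 2 / δ = 3 / δ := by ring
      linarith
    have hsq : (1 / δ + c) ^ 2 ≤ (3 / δ) ^ 2 := by
      apply pow_le_pow_left₀ (by positivity) h3
    calc (e / δ) * (1 / δ + c) ^ 2 ≤ (e / δ) * (3 / δ) ^ 2 := by
          apply mul_le_mul_of_nonneg_left hsq (by positivity)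
      _ = 9 * e / δ ^ 3 := by field_simp; ring

/-- if η = O(δ^{3+β}) with β > 0, then the Rayleigh quotient
R(δ,η) = [(η/δ)(1/δ+c)²] / [c² + 1 + (η/(3δ))(1 − cδ + c²δ²)], with
c = (η+2δ)/(ηδ+2), satisfies R = O(δ^β) as δ → 0⁺; in particular R → 0. -/
theorem stmt17 (β : ℝ) (hβ : 0 < β) (η : ℝ → ℝ)
    (hη : ∀ δ ∈ Set.Ioo (0:ℝ) 1, 0 < η δ ∧ η δ < δ)
    (hO : ∃ C : ℝ, 0 < C ∧ ∀ᶠ δ in nhdsWithin 0 (Set.Ioi 0),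
      η δ ≤ C * δ ^ (3 + β)) :
    (∃ C' : ℝ, 0 < C' ∧ ∀ᶠ δ in nhdsWithin 0 (Set.Ioi 0),
      ((η δ / δ) * (1 / δ + (η δ + 2 * δ) / (η δ * δ + 2)) ^ 2) /
        (((η δ + 2 * δ) / (η δ * δ + 2)) ^ 2 + 1 +
          (η δ / (3 * δ)) * (1 - ((η δ + 2 * δ) / (η δ * δ + 2)) * δ +
            ((η δ + 2 * δ) / (η δ * δ + 2)) ^ 2 * δ ^ 2))
        ≤ C' * δ ^ β) ∧
    Tendsto (fun δ =>
        ((η δ / δ) * (1 / δ + (η δ + 2 * δ) / (η δ * δ + 2)) ^ 2) /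
          (((η δ + 2 * δ) / (η δ * δ + 2)) ^ 2 + 1 +
            (η δ / (3 * δ)) * (1 - ((η δ + 2 * δ) / (η δ * δ + 2)) * δ +
              ((η δ + 2 * δ) / (η δ * δ + 2)) ^ 2 * δ ^ 2)))
      (nhdsWithin 0 (Set.Ioi 0)) (nhds 0) := by
  obtain ⟨C, hC, hOC⟩ := hO
  have hmem : Set.Ioo (0:ℝ) 1 ∈ nhdsWithin 0 (Set.Ioi 0) :=
    Ioo_mem_nhdsGT_of_mem (by constructor <;> norm_num)
  have hub : ∀ᶠ δ in nhdsWithin 0 (Set.Ioi 0),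
      ((η δ / δ) * (1 / δ + (η δ + 2 * δ) / (η δ * δ + 2)) ^ 2) /
        (((η δ + 2 * δ) / (η δ * δ + 2)) ^ 2 + 1 +
          (η δ / (3 * δ)) * (1 - ((η δ + 2 * δ) / (η δ * δ + 2)) * δ +
            ((η δ + 2 * δ) / (η δ * δ + 2)) ^ 2 * δ ^ 2))
        ≤ (9 * C) * δ ^ β := by
    filter_upwards [hOC, eventually_mem_set.mpr hmem] with δ hδO hδI
    obtain ⟨hηp, hηd⟩ := hη δ hδI
    obtain ⟨hδ0, hδ1⟩ := hδI
    have h := (stmt17_aux δ (η δ) hδ0 hδ1 hηp hηd).2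
    refine h.trans ?_
    have hpow : δ ^ (3 + β) = δ ^ (3:ℕ) * δ ^ β := by
      rw [← Real.rpow_natCast δ 3, ← Real.rpow_add hδ0]
      norm_num
    rw [div_le_iff₀ (by positivity)]
    calc 9 * η δ ≤ 9 * (C * δ ^ (3 + β)) := by linarith
      _ = 9 * C * δ ^ β * δ ^ 3 := by rw [hpow]; ring
  have hlb : ∀ᶠ δ in nhdsWithin 0 (Set.Ioi 0),
      0 ≤ ((η δ / δ) * (1 / δ + (η δ + 2 * δ) / (η δ * δ + 2)) ^ 2) /
        (((η δ + 2 * δ) / (η δ * δ + 2)) ^ 2 + 1 +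
          (η δ / (3 * δ)) * (1 - ((η δ + 2 * δ) / (η δ * δ + 2)) * δ +
            ((η δ + 2 * δ) / (η δ * δ + 2)) ^ 2 * δ ^ 2)) := by
    filter_upwards [eventually_mem_set.mpr hmem] with δ hδI
    obtain ⟨hηp, hηd⟩ := hη δ hδI
    exact (stmt17_aux δ (η δ) hδI.1 hδI.2 hηp hηd).1
  have hrpow : Tendsto (fun δ : ℝ => δ ^ β) (nhdsWithin 0 (Set.Ioi 0)) (nhds 0) := by
    have h := (Real.continuousAt_rpow_const 0 β (Or.inr hβ.le)).tendsto
    rw [Real.zero_rpow hβ.ne'] at h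
    exact h.mono_left nhdsWithin_le_nhds
  have hmul : Tendsto (fun δ : ℝ => (9 * C) * δ ^ β)
      (nhdsWithin 0 (Set.Ioi 0)) (nhds 0) := by
    have := hrpow.const_mul (9 * C)
    simpa using this
  exact ⟨⟨9 * C, by positivity, hub⟩, squeeze_zero' hlb hub hmul⟩
end
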